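/- For every t ≥ 1 and any step size ρ_t ∈ (0,1], one mirror descent step satisfies g_primal(x_{t−1}) − g_primal(x_*) ≤ ρ_t R²/(2μ) + (1/ρ_t − 1)·D(x_*, x_{t−1}) − (1/ρ_t)·D(x_*, x_t). -/

import Mathlib

open scoped RealInnerProductSpace
open Finset

noncomputable section

/-- `y` is a subgradient of `f` at `z`. -/
def IsSubgrad {n : ℕ} (f : EuclideanSpace ℝ (Fin n) → ℝ)
    (z y : EuclideanSpace ℝ (Fin n)) : Prop :=
  ∀ z', f z + ⟪y, z' - z⟫ ≤ f z'

/-- Bregman divergence of a differentiable function `h` with gradient `h'`. -/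
def Dbreg {p : ℕ} (h : EuclideanSpace ℝ (Fin p) → ℝ)
    (h' : EuclideanSpace ℝ (Fin p) → EuclideanSpace ℝ (Fin p))
    (x₁ x₂ : EuclideanSpace ℝ (Fin p)) : ℝ :=
  h x₁ - h x₂ - ⟪x₁ - x₂, h' x₂⟫

/-- A convex function lies above the line with slope given by a derivative along a segment. -/
lemma aux_line_lower_bound {p : ℕ} {φ : EuclideanSpace ℝ (Fin p) → ℝ}
    (hc : ConvexOn ℝ Set.univ φ) {a b : EuclideanSpace ℝ (Fin p)} {d : ℝ}
    (hd : HasDerivAt (fun t : ℝ => φ (b + t • (a - b))) d 0) :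
    φ b + d ≤ φ a := by
  have hψc : ConvexOn ℝ Set.univ (fun t : ℝ => φ (b + t • (a - b))) := by
    have h2 := hc.comp_affineMap (AffineMap.lineMap b a)
    have heq : (φ ∘ (AffineMap.lineMap b a)) = fun t : ℝ => φ (b + t • (a - b)) := by
      funext t
      simp [Function.comp, AffineMap.lineMap_apply, add_comm]
    rw [heq] at h2
    simpa using h2
  have key := hψc.le_slope_of_hasDerivAt (Set.mem_univ (0:ℝ)) (Set.mem_univ (1:ℝ))
    one_pos hd
  rw [slope_def_field] at key
  simp only [one_smul, zero_smul, add_zero] at key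
  have h1 : b + (a - b) = a := by abel
  rw [h1] at key
  norm_num at key
  linarith

/-- First-order lower bound for a strongly convex differentiable function. -/
lemma aux_strong_grad {p : ℕ} {μ : ℝ} (hμ : 0 < μ)
    {h : EuclideanSpace ℝ (Fin p) → ℝ}
    {h' : EuclideanSpace ℝ (Fin p) → EuclideanSpace ℝ (Fin p)}
    (hdiff : ∀ x, HasGradientAt h (h' x) x)
    (hsc : StrongConvexOn Set.univ μ h)
    (a b : EuclideanSpace ℝ (Fin p)) :
    h b + ⟪a - b, h' b⟫ + μ / 2 * ‖a - b‖ ^ 2 ≤ h a := by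
  set φ : EuclideanSpace ℝ (Fin p) → ℝ := fun x => h x - μ / 2 * ‖x‖ ^ 2 with hφ
  have hcφ : ConvexOn ℝ Set.univ φ := strongConvexOn_iff_convex.mp hsc
  -- derivative of t ↦ h (b + t • (a - b)) at 0
  have hγ : HasDerivAt (fun t : ℝ => b + t • (a - b)) (a - b) 0 := by
    simpa using ((hasDerivAt_id (0:ℝ)).smul_const (a - b)).const_add b
  have hγ0 : b + (0:ℝ) • (a - b) = b := by simp
  have hF : HasFDerivAt h (InnerProductSpace.toDual ℝ _ (h' b)) b :=
    hasGradientAt_iff_hasFDerivAt.mp (hdiff b)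
  have hF' : HasFDerivAt h (InnerProductSpace.toDual ℝ _ (h' b)) (b + (0:ℝ) • (a - b)) := by
    rw [hγ0]; exact hF
  have hcomp : HasDerivAt (fun t : ℝ => h (b + t • (a - b))) ⟪h' b, a - b⟫ 0 := by
    have := hF'.comp_hasDerivAt 0 hγ
    simpa [InnerProductSpace.toDual_apply_apply, Function.comp_def] using this
  -- derivative of the quadratic part
  have hq : HasDerivAt (fun t : ℝ => ⟪b + t • (a - b), b + t • (a - b)⟫) (2 * ⟪b, a - b⟫) 0 := by
    have := hγ.inner (𝕜 := ℝ) hγ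
    rw [hγ0] at this
    have h2 : (⟪b, a - b⟫ + ⟪a - b, b⟫ : ℝ) = 2 * ⟪b, a - b⟫ := by
      rw [real_inner_comm (a - b) b]; ring
    rwa [h2] at this
  have hqn : HasDerivAt (fun t : ℝ => μ / 2 * ‖b + t • (a - b)‖ ^ 2) (μ / 2 * (2 * ⟪b, a - b⟫)) 0 := by
    have := hq.const_mul (μ / 2)
    have heq : (fun t : ℝ => μ / 2 * ⟪b + t • (a - b), b + t • (a - b)⟫)
        = fun t : ℝ => μ / 2 * ‖b + t • (a - b)‖ ^ 2 := by
      funext t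
      rw [real_inner_self_eq_norm_sq]
    rwa [heq] at this
  have hdφ : HasDerivAt (fun t : ℝ => φ (b + t • (a - b)))
      (⟪h' b, a - b⟫ - μ / 2 * (2 * ⟪b, a - b⟫)) 0 := hcomp.sub hqn
  have key := aux_line_lower_bound hcφ hdφ
  have hnorm : ‖a - b‖ ^ 2 = ‖a‖ ^ 2 - 2 * ⟪a, b⟫ + ‖b‖ ^ 2 := norm_sub_sq_real a b
  have hib : (⟪a - b, h' b⟫ : ℝ) = ⟪h' b, a - b⟫ := real_inner_comm _ _
  have hib2 : (⟪b, a - b⟫ : ℝ) = ⟪a, b⟫ - ‖b‖ ^ 2 := by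
    rw [inner_sub_right, real_inner_self_eq_norm_sq, real_inner_comm]
  simp only [hφ] at key
  have hib3 : μ / 2 * (2 * ⟪b, a - b⟫) = μ * ⟪a, b⟫ - μ * ‖b‖ ^ 2 := by
    rw [hib2]; ring
  rw [hib, hnorm]
  linarith [key, hib3]

set_option maxHeartbeats 1000000 in
theorem mirror_descent_one_step {p n : ℕ}
    (A : EuclideanSpace ℝ (Fin p) →L[ℝ] EuclideanSpace ℝ (Fin n))
    (f : EuclideanSpace ℝ (Fin n) → ℝ)
    (hf : ConvexOn ℝ Set.univ f)
    (μ : ℝ) (hμ : 0 < μ)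
    (h : EuclideanSpace ℝ (Fin p) → ℝ)
    (h' : EuclideanSpace ℝ (Fin p) → EuclideanSpace ℝ (Fin p))
    (hdiff : ∀ x, HasGradientAt h (h' x) x)
    (hsc : StrongConvexOn Set.univ μ h)
    (R : ℝ) (hR0 : 0 ≤ R)
    (hR : ∀ y y' : EuclideanSpace ℝ (Fin n),
      (∃ z, IsSubgrad f z y) → (∃ z, IsSubgrad f z y') →
      ‖(ContinuousLinearMap.adjoint A) (y - y')‖ ≤ R)
    (x : ℕ → EuclideanSpace ℝ (Fin p))
    (ybar : ℕ → EuclideanSpace ℝ (Fin n))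
    (ρ : ℕ → ℝ)
    (hsub : ∀ t, IsSubgrad f (A (x t)) (ybar t))
    (hupd : ∀ t, 1 ≤ t → h' (x t) =
      (1 - ρ t) • h' (x (t - 1)) - ρ t • (ContinuousLinearMap.adjoint A) (ybar (t - 1)))
    (hinit : ∃ y₀ z₀, IsSubgrad f z₀ y₀ ∧ h' (x 0) = -((ContinuousLinearMap.adjoint A) y₀))
    (xs : EuclideanSpace ℝ (Fin p))
    (hxs : ∀ x', h xs + f (A xs) ≤ h x' + f (A x'))
    (hρ : ∀ t, 1 ≤ t → 0 < ρ t ∧ ρ t ≤ 1) :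
    ∀ t : ℕ, 1 ≤ t →
      h (x (t - 1)) + f (A (x (t - 1))) - (h xs + f (A xs)) ≤
        ρ t * R ^ 2 / (2 * μ) + (1 / ρ t - 1) * Dbreg h h' xs (x (t - 1))
          - (1 / ρ t) * Dbreg h h' xs (x t) := by
  -- uniform bound on ‖h' (x s) + Aᵀ y‖ for subgradients y
  have hbound : ∀ s : ℕ, ∀ yy : EuclideanSpace ℝ (Fin n),
      (∃ z, IsSubgrad f z yy) → ‖h' (x s) + (ContinuousLinearMap.adjoint A) yy‖ ≤ R := by
    intro s
    induction s with
    | zero =>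
      rintro yy ⟨z, hz⟩
      obtain ⟨y₀, z₀, hy₀, heq⟩ := hinit
      have hid : h' (x 0) + (ContinuousLinearMap.adjoint A) yy
          = (ContinuousLinearMap.adjoint A) (yy - y₀) := by
        rw [heq, map_sub]; abel
      rw [hid]
      exact hR _ _ ⟨_, hz⟩ ⟨_, hy₀⟩
    | succ s ih =>
      rintro yy ⟨z, hz⟩
      have hu := hupd (s + 1) (by omega)
      simp only [Nat.add_sub_cancel] at hu
      obtain ⟨hρ0', hρ1'⟩ := hρ (s + 1) (by omega)
      have hid : h' (x (s + 1)) + (ContinuousLinearMap.adjoint A) yy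
          = (1 - ρ (s + 1)) • (h' (x s) + (ContinuousLinearMap.adjoint A) yy)
            + ρ (s + 1) • ((ContinuousLinearMap.adjoint A) (yy - ybar s)) := by
        rw [hu, map_sub]
        module
      rw [hid]
      refine (norm_add_le _ _).trans ?_
      rw [norm_smul, norm_smul, Real.norm_eq_abs, Real.norm_eq_abs,
        abs_of_nonneg (by linarith : (0:ℝ) ≤ 1 - ρ (s + 1)), abs_of_nonneg hρ0'.le]
      have b1 : ‖h' (x s) + (ContinuousLinearMap.adjoint A) yy‖ ≤ R := ih yy ⟨z, hz⟩
      have b2 : ‖(ContinuousLinearMap.adjoint A) (yy - ybar s)‖ ≤ R :=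
        hR _ _ ⟨_, hz⟩ ⟨_, hsub s⟩
      nlinarith [norm_nonneg (h' (x s) + (ContinuousLinearMap.adjoint A) yy),
        norm_nonneg ((ContinuousLinearMap.adjoint A) (yy - ybar s))]
  intro t ht
  obtain ⟨hρ0, hρ1⟩ := hρ t ht
  set b := x (t - 1) with hb
  set c := x t with hc
  set y := ybar (t - 1) with hy
  set v : EuclideanSpace ℝ (Fin p) := h' b + (ContinuousLinearMap.adjoint A) y with hvdef
  have hv : h' c = h' b - ρ t • v := by
    rw [hc, hupd t ht, hvdef, ← hb, ← hy]
    module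
  have hvR : ‖v‖ ≤ R := hbound (t - 1) y ⟨_, hsub (t - 1)⟩
  -- abbreviations for real quantities
  set D1 := Dbreg h h' xs b with hD1
  set D2 := Dbreg h h' xs c with hD2
  set Dcb := Dbreg h h' c b with hDcb
  set P : ℝ := ⟪xs - b, v⟫ with hP
  set Q : ℝ := ⟪b - c, v⟫ with hQ
  -- three-point identity
  have F1 : D1 - D2 = Dcb - ρ t * P - ρ t * Q := by
    have s1 : (⟪xs - c, h' b⟫ : ℝ) = ⟪xs - b, h' b⟫ + ⟪b - c, h' b⟫ := by
      rw [← inner_add_left]; congr 1; abel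
    have s2 : (⟪xs - c, v⟫ : ℝ) = P + Q := by
      rw [hP, hQ, ← inner_add_left]; congr 1; abel
    have s3 : (⟪c - b, h' b⟫ : ℝ) = -⟪b - c, h' b⟫ := by
      rw [← inner_neg_left]; congr 1; abel
    simp only [hD1, hD2, hDcb, Dbreg, hv, inner_sub_right, real_inner_smul_right, s1, s2]
    rw [s3]; ring
  -- strong convexity lower bound
  have F2 : μ / 2 * ‖c - b‖ ^ 2 ≤ Dcb := by
    have := aux_strong_grad hμ hdiff hsc c b
    rw [hDcb, Dbreg]
    linarith
  have F3 : Q ≤ ‖c - b‖ * ‖v‖ := by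
    calc Q ≤ ‖b - c‖ * ‖v‖ := real_inner_le_norm _ _
    _ = ‖c - b‖ * ‖v‖ := by rw [norm_sub_rev]
  -- subgradient bound
  have F6 : (⟪xs - b, (ContinuousLinearMap.adjoint A) y⟫ : ℝ) ≤ f (A xs) - f (A b) := by
    have hE1 := hsub (t - 1) (A xs)
    rw [← hb, ← hy] at hE1
    have hadj : (⟪xs - b, (ContinuousLinearMap.adjoint A) y⟫ : ℝ) = ⟪y, A xs - A b⟫ := by
      rw [ContinuousLinearMap.adjoint_inner_right, map_sub, real_inner_comm]
    linarith [hE1, hadj.le, hadj.ge]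
  have F5 : P ≤ h xs - h b - D1 + (f (A xs) - f (A b)) := by
    have : P = (h xs - h b - D1) + ⟪xs - b, (ContinuousLinearMap.adjoint A) y⟫ := by
      rw [hP, hvdef, inner_add_right, hD1, Dbreg]
      ring
    linarith
  -- AM-GM type bound:  2μρQ ≤ 2μ Dcb + ρ² R²
  have key1 : 2 * μ * ρ t * Q ≤ 2 * μ * Dcb + ρ t ^ 2 * R ^ 2 := by
    obtain ⟨w, hw, hwnn⟩ : ∃ w : ℝ, ‖c - b‖ = w ∧ 0 ≤ w := ⟨_, rfl, norm_nonneg _⟩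
    obtain ⟨nv, hnv, hnvnn⟩ : ∃ nv : ℝ, ‖v‖ = nv ∧ 0 ≤ nv := ⟨_, rfl, norm_nonneg _⟩
    rw [hw, hnv] at F3
    rw [hnv] at hvR
    rw [hw] at F2
    have stepb : (2 * μ * ρ t) * Q ≤ (2 * μ * ρ t) * (w * nv) :=
      mul_le_mul_of_nonneg_left F3 (by positivity)
    have stepc : (2 * μ * ρ t) * (w * nv) ≤ μ ^ 2 * w ^ 2 + ρ t ^ 2 * nv ^ 2 := by
      nlinarith [sq_nonneg (μ * w - ρ t * nv)]
    have stepd : ρ t ^ 2 * nv ^ 2 ≤ ρ t ^ 2 * R ^ 2 :=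
      mul_le_mul_of_nonneg_left (pow_le_pow_left₀ hnvnn hvR 2) (sq_nonneg (ρ t))
    have stepe : μ ^ 2 * w ^ 2 ≤ 2 * μ * Dcb := by
      have h2 := mul_le_mul_of_nonneg_left F2 (by positivity : (0:ℝ) ≤ 2 * μ)
      nlinarith [h2]
    linarith [stepb, stepc, stepd, stepe]
  have key2 : 2 * μ * ρ t * P ≤ 2 * μ * ρ t * (h xs - h b - D1 + (f (A xs) - f (A b))) :=
    mul_le_mul_of_nonneg_left F5 (by positivity)
  -- master inequality (goal multiplied by 2μρ)
  have F1m : 2 * μ * D1 - 2 * μ * D2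
      = 2 * μ * Dcb - 2 * μ * (ρ t * P) - 2 * μ * (ρ t * Q) := by
    linear_combination (2 * μ) * F1
  have master : 2 * μ * ρ t * (h b + f (A b) - (h xs + f (A xs)))
      ≤ ρ t ^ 2 * R ^ 2 + 2 * μ * ((1 - ρ t) * D1 - D2) := by
    linarith [F1m, key1, key2]
  have hpos : (0:ℝ) < 2 * μ * ρ t := by positivity
  rw [← mul_le_mul_iff_right₀ hpos]
  have hX : (2 * μ * ρ t) * (ρ t * R ^ 2 / (2 * μ) + (1 / ρ t - 1) * D1 - (1 / ρ t) * D2)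
      = ρ t ^ 2 * R ^ 2 + 2 * μ * ((1 - ρ t) * D1 - D2) := by
    field_simp
    ring
  rw [hX]
  linarith [master]
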